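/- With m, s, Λ as above, if 1/μ₂ > 1/μ₁ (so m ≥ 0) and σ₂²/μ₂³ > σ₁²/μ₁³ (so s² is increasing on [c-h, c+h]), then Λ is strictly increasing and concave on [c - h, c], and strictly decreasing and convex on [c, c + h]. -/

import Mathlib

open Set Real

private lemma shark_core (e D α β l r : ℝ) (hD : 0 < D) (hpos : 0 < e + D * l)
    (hα : α < 0) (hβ : β ≤ 0) :
    StrictMonoOn (fun t => α / Real.sqrt (e + D * t) - β * Real.sqrt (e + D * t))
      (Set.Icc l r) ∧
    ConcaveOn ℝ (Set.Icc l r)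
      (fun t => α / Real.sqrt (e + D * t) - β * Real.sqrt (e + D * t)) := by
  have hx : ∀ t, l ≤ t → 0 < e + D * t := by
    intro t ht; nlinarith [mul_nonneg hD.le (sub_nonneg.2 ht)]
  have hder : ∀ t, 0 < e + D * t →
      HasDerivAt (fun u => α / Real.sqrt (e + D * u) - β * Real.sqrt (e + D * u))
        (-(α * D) / (2 * ((e + D * t) * Real.sqrt (e + D * t)))
          - β * D / (2 * Real.sqrt (e + D * t))) t := by
    intro t ht
    have hsp : 0 < Real.sqrt (e + D * t) := Real.sqrt_pos.2 ht
    have hss : Real.sqrt (e + D * t) ^ 2 = e + D * t := Real.sq_sqrt ht.le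
    have hxd : HasDerivAt (fun u => e + D * u) D t := by
      simpa using ((hasDerivAt_id t).const_mul D).const_add e
    have hsd : HasDerivAt (fun u => Real.sqrt (e + D * u))
        (D / (2 * Real.sqrt (e + D * t))) t := hxd.sqrt ht.ne'
    have h1 := (hasDerivAt_const t α).div hsd hsp.ne'
    have h2 := hsd.const_mul β
    have h3 := h1.sub h2
    refine h3.congr_deriv ?_
    set s := Real.sqrt (e + D * t) with hs_def
    rw [← hss]
    field_simp
    ring
  have hder2 : ∀ t, 0 < e + D * t →
      HasDerivAt (fun u => -(α * D) / (2 * ((e + D * u) * Real.sqrt (e + D * u)))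
          - β * D / (2 * Real.sqrt (e + D * u)))
        (3 * (α * D ^ 2) / (4 * ((e + D * t) ^ 2 * Real.sqrt (e + D * t)))
          + β * D ^ 2 / (4 * ((e + D * t) * Real.sqrt (e + D * t)))) t := by
    intro t ht
    have hsp : 0 < Real.sqrt (e + D * t) := Real.sqrt_pos.2 ht
    have hss : Real.sqrt (e + D * t) ^ 2 = e + D * t := Real.sq_sqrt ht.le
    have hxd : HasDerivAt (fun u => e + D * u) D t := by
      simpa using ((hasDerivAt_id t).const_mul D).const_add e
    have hsd : HasDerivAt (fun u => Real.sqrt (e + D * u))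
        (D / (2 * Real.sqrt (e + D * t))) t := hxd.sqrt ht.ne'
    have hprod := hxd.mul hsd
    have hden1 := hprod.const_mul 2
    have hA1 := (hasDerivAt_const t (-(α * D))).div hden1
      (mul_pos two_pos (mul_pos ht hsp)).ne'
    have hden2 := hsd.const_mul 2
    have hA2 := (hasDerivAt_const t (β * D)).div hden2 (mul_pos two_pos hsp).ne'
    have h3 := hA1.sub hA2
    refine h3.congr_deriv ?_
    simp only [Pi.mul_apply]
    set s := Real.sqrt (e + D * t) with hs_def
    rw [← hss]
    field_simp
    ring
  have hcont : ContinuousOn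
      (fun t => α / Real.sqrt (e + D * t) - β * Real.sqrt (e + D * t)) (Set.Icc l r) := by
    have hcs : Continuous (fun t : ℝ => Real.sqrt (e + D * t)) :=
      Real.continuous_sqrt.comp (by continuity)
    exact (continuousOn_const.div hcs.continuousOn
      (fun t ht => (Real.sqrt_pos.2 (hx t ht.1)).ne')).sub
      (continuousOn_const.mul hcs.continuousOn)
  constructor
  · refine strictMonoOn_of_deriv_pos (convex_Icc l r) hcont ?_
    intro t ht
    rw [interior_Icc] at ht
    have hxt := hx t ht.1.le
    have hsp : 0 < Real.sqrt (e + D * t) := Real.sqrt_pos.2 hxt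
    rw [(hder t hxt).deriv]
    have t1 : 0 < -(α * D) / (2 * ((e + D * t) * Real.sqrt (e + D * t))) :=
      div_pos (by nlinarith) (by positivity)
    have t2 : β * D / (2 * Real.sqrt (e + D * t)) ≤ 0 :=
      div_nonpos_iff.2 (Or.inr ⟨mul_nonpos_of_nonpos_of_nonneg hβ hD.le, by positivity⟩)
    linarith
  · refine concaveOn_of_hasDerivWithinAt2_nonpos (convex_Icc l r) hcont
      (f' := fun t => -(α * D) / (2 * ((e + D * t) * Real.sqrt (e + D * t)))
          - β * D / (2 * Real.sqrt (e + D * t)))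
      (f'' := fun t => 3 * (α * D ^ 2) / (4 * ((e + D * t) ^ 2 * Real.sqrt (e + D * t)))
          + β * D ^ 2 / (4 * ((e + D * t) * Real.sqrt (e + D * t)))) ?_ ?_ ?_
    · intro t ht
      rw [interior_Icc] at ht
      exact (hder t (hx t ht.1.le)).hasDerivWithinAt
    · intro t ht
      rw [interior_Icc] at ht
      exact (hder2 t (hx t ht.1.le)).hasDerivWithinAt
    · intro t ht
      rw [interior_Icc] at ht
      have hxt := hx t ht.1.le
      have hsp : 0 < Real.sqrt (e + D * t) := Real.sqrt_pos.2 hxt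
      have t1 : 3 * (α * D ^ 2) / (4 * ((e + D * t) ^ 2 * Real.sqrt (e + D * t))) ≤ 0 :=
        div_nonpos_iff.2 (Or.inr ⟨by nlinarith, by positivity⟩)
      have t2 : β * D ^ 2 / (4 * ((e + D * t) * Real.sqrt (e + D * t))) ≤ 0 :=
        div_nonpos_iff.2 (Or.inr ⟨by nlinarith, by positivity⟩)
      linarith

private lemma shark_core_anti (e D α β l r : ℝ) (hD : 0 < D) (hpos : 0 < e + D * l)
    (hα : 0 < α) (hβ : 0 ≤ β) :
    StrictAntiOn (fun t => α / Real.sqrt (e + D * t) - β * Real.sqrt (e + D * t))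
      (Set.Icc l r) ∧
    ConvexOn ℝ (Set.Icc l r)
      (fun t => α / Real.sqrt (e + D * t) - β * Real.sqrt (e + D * t)) := by
  obtain ⟨h1, h2⟩ := shark_core e D (-α) (-β) l r hD hpos (neg_neg_iff_pos.2 hα) (neg_nonpos.2 hβ)
  have hfun : (fun t => -α / Real.sqrt (e + D * t) - -β * Real.sqrt (e + D * t))
      = fun t => -(α / Real.sqrt (e + D * t) - β * Real.sqrt (e + D * t)) := by
    funext t; ring
  rw [hfun] at h1 h2
  constructor
  · intro a ha b hb hab
    have := h1 ha hb hab
    dsimp at this ⊢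
    linarith
  · rw [show (fun t => α / Real.sqrt (e + D * t) - β * Real.sqrt (e + D * t))
        = -(fun t => -(α / Real.sqrt (e + D * t) - β * Real.sqrt (e + D * t))) from by
      funext t; simp]
    exact h2.neg

private lemma eqOn_strictMonoOn {s : Set ℝ} {f g : ℝ → ℝ}
    (hf : StrictMonoOn f s) (h : Set.EqOn f g s) : StrictMonoOn g s := by
  intro a ha b hb hab
  rw [← h ha, ← h hb]; exact hf ha hb hab

private lemma eqOn_strictAntiOn {s : Set ℝ} {f g : ℝ → ℝ}
    (hf : StrictAntiOn f s) (h : Set.EqOn f g s) : StrictAntiOn g s := by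
  intro a ha b hb hab
  rw [← h ha, ← h hb]; exact hf ha hb hab

private lemma eqOn_concaveOn {s : Set ℝ} {f g : ℝ → ℝ}
    (hf : ConcaveOn ℝ s f) (h : Set.EqOn f g s) : ConcaveOn ℝ s g :=
  ⟨hf.1, fun x hx y hy a b ha hb hab => by
    rw [← h (hf.1 hx hy ha hb hab), ← h hx, ← h hy]; exact hf.2 hx hy ha hb hab⟩

private lemma eqOn_convexOn {s : Set ℝ} {f g : ℝ → ℝ}
    (hf : ConvexOn ℝ s f) (h : Set.EqOn f g s) : ConvexOn ℝ s g :=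
  ⟨hf.1, fun x hx y hy a b ha hb hab => by
    rw [← h (hf.1 hx hy ha hb hab), ← h hx, ← h hy]; exact hf.2 hx hy ha hb hab⟩

private lemma div_sqrt_sub (x p q : ℝ) (hx : 0 < x) :
    p / Real.sqrt x - q * Real.sqrt x = (p - q * x) / Real.sqrt x := by
  have hsp : 0 < Real.sqrt x := Real.sqrt_pos.2 hx
  have hss : Real.sqrt x ^ 2 = x := Real.sq_sqrt hx.le
  rw [← hss]
  field_simp
  rw [hss, hss]

theorem sharkFin_west
    (T c h μ₁ μ₂ v₁ v₂ : ℝ)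
    (hT : 0 < T) (hc : c ∈ Set.Ioo 0 T) (hh : h ∈ Set.Ioc 0 (T / 2))
    (hμ₁ : 0 < μ₁) (hμ₂ : 0 < μ₂) (hv₁ : 0 < v₁) (hv₂ : 0 < v₂)
    (hμne : μ₁ ≠ μ₂)
    (hrate : 1 / μ₂ > 1 / μ₁)
    (hvar : v₂ / μ₂ ^ 3 > v₁ / μ₁ ^ 3)
    (m s2 Λ : ℝ → ℝ)
    (hm : ∀ t, m t = if |t - c| ≤ h then (1 / μ₂ - 1 / μ₁) * (h - |t - c|) else 0)
    (hs2 : ∀ t, s2 t =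
      if t ≤ c - h then 2 * h * v₁ / μ₁ ^ 3
      else if c + h ≤ t then 2 * h * v₂ / μ₂ ^ 3
      else (t + h - c) * v₂ / μ₂ ^ 3 + (c - (t - h)) * v₁ / μ₁ ^ 3)
    (hΛ : ∀ t, Λ t = m t / Real.sqrt (s2 t)) :
    StrictMonoOn Λ (Set.Icc (c - h) c) ∧ ConcaveOn ℝ (Set.Icc (c - h) c) Λ ∧
      StrictAntiOn Λ (Set.Icc c (c + h)) ∧ ConvexOn ℝ (Set.Icc c (c + h)) Λ := by
  obtain ⟨hh0, hhT⟩ := hh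
  have hA : 0 < 1 / μ₂ - 1 / μ₁ := sub_pos.2 hrate
  have hB : 0 < v₂ / μ₂ ^ 3 := div_pos hv₂ (pow_pos hμ₂ 3)
  have hC : 0 < v₁ / μ₁ ^ 3 := div_pos hv₁ (pow_pos hμ₁ 3)
  have hDp : 0 < v₂ / μ₂ ^ 3 - v₁ / μ₁ ^ 3 := sub_pos.2 hvar
  set A : ℝ := 1 / μ₂ - 1 / μ₁ with hAdef
  set B : ℝ := v₂ / μ₂ ^ 3 with hBdef
  set C : ℝ := v₁ / μ₁ ^ 3 with hCdef
  set e : ℝ := (h - c) * B + (c + h) * C with hedef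
  clear_value A B C e
  have hDne : B - C ≠ 0 := hDp.ne'
  -- s2 agrees with the affine function e + (B-C)*t on [c-h, c+h]
  have hs2' : ∀ t ∈ Set.Icc (c - h) (c + h), s2 t = e + (B - C) * t := by
    intro t ht
    rw [hs2 t]
    split_ifs with h1 h2
    · have ht' : t = c - h := le_antisymm h1 ht.1
      subst ht'
      rw [hedef, hBdef, hCdef]; ring
    · have ht' : t = c + h := le_antisymm ht.2 h2
      subst ht'
      rw [hedef, hBdef, hCdef]; ring
    · rw [hedef, hBdef, hCdef]; ring
  -- positivity of the affine function at left endpoints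
  have hposL : 0 < e + (B - C) * (c - h) := by
    have : e + (B - C) * (c - h) = 2 * h * C := by rw [hedef]; ring
    rw [this]
    exact mul_pos (mul_pos two_pos hh0) hC
  have hposR : 0 < e + (B - C) * c := by
    have : e + (B - C) * c = h * (B + C) := by rw [hedef]; ring
    rw [this]
    exact mul_pos hh0 (add_pos hB hC)
  have hxpos : ∀ t, c - h ≤ t → 0 < e + (B - C) * t := by
    intro t ht
    nlinarith [mul_nonneg hDp.le (sub_nonneg.2 ht), hposL]
  -- Left interval
  have hα₁ : -(A * (2 * h * C) / (B - C)) < 0 := by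
    have : 0 < A * (2 * h * C) / (B - C) :=
      div_pos (mul_pos hA (mul_pos (mul_pos two_pos hh0) hC)) hDp
    linarith
  have hβ₁ : -(A / (B - C)) ≤ 0 := by
    have : 0 < A / (B - C) := div_pos hA hDp
    linarith
  obtain ⟨hmono1, hconc1⟩ := shark_core e (B - C) (-(A * (2 * h * C) / (B - C)))
    (-(A / (B - C))) (c - h) c hDp hposL hα₁ hβ₁
  have hEq1 : Set.EqOn
      (fun t => -(A * (2 * h * C) / (B - C)) / Real.sqrt (e + (B - C) * t)
        - -(A / (B - C)) * Real.sqrt (e + (B - C) * t)) Λ (Set.Icc (c - h) c) := by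
    intro t ht
    have ht' : t ∈ Set.Icc (c - h) (c + h) := ⟨ht.1, by linarith [ht.2]⟩
    have hxt : 0 < e + (B - C) * t := hxpos t ht.1
    have hsp : 0 < Real.sqrt (e + (B - C) * t) := Real.sqrt_pos.2 hxt
    have hss : Real.sqrt (e + (B - C) * t) ^ 2 = e + (B - C) * t := Real.sq_sqrt hxt.le
    show -(A * (2 * h * C) / (B - C)) / Real.sqrt (e + (B - C) * t)
        - -(A / (B - C)) * Real.sqrt (e + (B - C) * t) = Λ t
    rw [hΛ t, hs2' t ht', hm t,
      abs_of_nonpos (by linarith [ht.2] : t - c ≤ 0),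
      if_pos (by linarith [ht.1] : -(t - c) ≤ h)]
    have key : -(A * (2 * h * C) / (B - C)) - -(A / (B - C)) * (e + (B - C) * t)
        = A * (h - -(t - c)) := by
      rw [hedef]
      field_simp [hDne]
      ring
    rw [div_sqrt_sub _ _ _ hxt, key]
  -- Right interval
  have hα₂ : 0 < A * (2 * h * B) / (B - C) :=
    div_pos (mul_pos hA (mul_pos (mul_pos two_pos hh0) hB)) hDp
  have hβ₂ : (0:ℝ) ≤ A / (B - C) := (div_pos hA hDp).le
  obtain ⟨hanti2, hconv2⟩ := shark_core_anti e (B - C) (A * (2 * h * B) / (B - C))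
    (A / (B - C)) c (c + h) hDp hposR hα₂ hβ₂
  have hEq2 : Set.EqOn
      (fun t => A * (2 * h * B) / (B - C) / Real.sqrt (e + (B - C) * t)
        - A / (B - C) * Real.sqrt (e + (B - C) * t)) Λ (Set.Icc c (c + h)) := by
    intro t ht
    have ht' : t ∈ Set.Icc (c - h) (c + h) := ⟨by linarith [ht.1], ht.2⟩
    have hxt : 0 < e + (B - C) * t := hxpos t (by linarith [ht.1])
    have hsp : 0 < Real.sqrt (e + (B - C) * t) := Real.sqrt_pos.2 hxt
    have hss : Real.sqrt (e + (B - C) * t) ^ 2 = e + (B - C) * t := Real.sq_sqrt hxt.le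
    show A * (2 * h * B) / (B - C) / Real.sqrt (e + (B - C) * t)
        - A / (B - C) * Real.sqrt (e + (B - C) * t) = Λ t
    rw [hΛ t, hs2' t ht', hm t,
      abs_of_nonneg (by linarith [ht.1] : 0 ≤ t - c),
      if_pos (by linarith [ht.2] : t - c ≤ h)]
    have key : A * (2 * h * B) / (B - C) - A / (B - C) * (e + (B - C) * t)
        = A * (h - (t - c)) := by
      rw [hedef]
      field_simp [hDne]
      ring
    rw [div_sqrt_sub _ _ _ hxt, key]
  exact ⟨eqOn_strictMonoOn hmono1 hEq1, eqOn_concaveOn hconc1 hEq1,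
    eqOn_strictAntiOn hanti2 hEq2, eqOn_convexOn hconv2 hEq2⟩
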